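/- Let h : ℕ and k : Fin h → ℕ. The product group ∀ i, Equiv.Perm (Fin (k i)) acts on the sigma type Σ i, Fin (k i) componentwise (σ • ⟨i, x⟩ = ⟨i, (σ i) x⟩), and hence on Finset (Σ i, Fin (k i)) by image. The number of orbits of this action on Finset (Σ i, Fin (k i)) equals ∏ i, (k i + 1). -/

import Mathlib

open Pointwise

/-- The componentwise action of the Young subgroup `∀ i, Equiv.Perm (Fin (k i))`
on the disjoint union `Σ i, Fin (k i)`. -/
instance youngAction {h : ℕ} {k : Fin h → ℕ} :
    MulAction (∀ i, Equiv.Perm (Fin (k i))) ((i : Fin h) × Fin (k i)) where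
  smul σ x := ⟨x.1, σ x.1 x.2⟩
  one_smul x := rfl
  mul_smul σ τ x := rfl

lemma young_smul_def {h : ℕ} {k : Fin h → ℕ} (σ : ∀ i, Equiv.Perm (Fin (k i)))
    (x : (i : Fin h) × Fin (k i)) : σ • x = ⟨x.1, σ x.1 x.2⟩ := rfl

/-- Any two finsets of the same cardinality in a fintype are related by a permutation. -/
lemma exists_perm_image_eq {α : Type*} [Fintype α] [DecidableEq α]
    {s t : Finset α} (hc : s.card = t.card) : ∃ σ : Equiv.Perm α, s.image σ = t := by
  have h' : sᶜ.card = tᶜ.card := by simp [Finset.card_compl, hc]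
  let e1 : s ≃ t := Finset.equivOfCardEq hc
  let e2 : (sᶜ : Finset α) ≃ (tᶜ : Finset α) := Finset.equivOfCardEq h'
  let e2' : {x // ¬ x ∈ s} ≃ {x // ¬ x ∈ t} :=
    (Equiv.subtypeEquivRight (fun x => (Finset.mem_compl).symm)).trans
      (e2.trans (Equiv.subtypeEquivRight (fun x => Finset.mem_compl)))
  refine ⟨(Equiv.sumCompl (· ∈ s)).symm.trans
    ((e1.sumCongr e2').trans (Equiv.sumCompl (· ∈ t))), ?_⟩
  apply Finset.eq_of_subset_of_card_le
  · intro y hy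
    simp only [Finset.mem_image] at hy
    obtain ⟨x, hx, rfl⟩ := hy
    have hval : ((Equiv.sumCompl (· ∈ s)).symm.trans
        ((e1.sumCongr e2').trans (Equiv.sumCompl (· ∈ t)))) x = (e1 ⟨x, hx⟩ : α) := by
      simp only [Equiv.trans_apply, Equiv.sumCompl_symm_apply_of_pos hx,
        Equiv.sumCongr_apply, Sum.map_inl, Equiv.sumCompl_apply_inl]
    rw [hval]
    exact (e1 ⟨x, hx⟩).2
  · rw [Finset.card_image_of_injective _ (Equiv.injective _), hc]

/-- The fiber of a finset of the disjoint union over the index `i`. -/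
def fib {h : ℕ} {k : Fin h → ℕ} (s : Finset ((i : Fin h) × Fin (k i))) (i : Fin h) :
    Finset (Fin (k i)) :=
  Finset.univ.filter (fun x => (⟨i, x⟩ : (i : Fin h) × Fin (k i)) ∈ s)

lemma mem_fib {h : ℕ} {k : Fin h → ℕ} {s : Finset ((i : Fin h) × Fin (k i))} {i : Fin h}
    {x : Fin (k i)} : x ∈ fib s i ↔ (⟨i, x⟩ : (i : Fin h) × Fin (k i)) ∈ s := by
  simp [fib]

lemma fib_smul {h : ℕ} {k : Fin h → ℕ} (σ : ∀ i, Equiv.Perm (Fin (k i)))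
    (s : Finset ((i : Fin h) × Fin (k i))) (i : Fin h) :
    fib (σ • s) i = (fib s i).image (σ i) := by
  ext y
  simp only [mem_fib, Finset.mem_smul_finset, Finset.mem_image]
  constructor
  · rintro ⟨⟨j, x⟩, hx, hxy⟩
    rw [young_smul_def] at hxy
    obtain ⟨rfl, hx2⟩ := Sigma.mk.inj_iff.mp hxy
    exact ⟨x, hx, eq_of_heq hx2⟩
  · rintro ⟨x, hx, rfl⟩
    exact ⟨⟨i, x⟩, hx, rfl⟩

lemma card_filter_val_lt (n m : ℕ) (hm : m ≤ n) :
    (Finset.univ.filter (fun x : Fin n => (x : ℕ) < m)).card = m := by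
  rw [← Finset.card_image_of_injective _ Fin.val_injective]
  have himg : (Finset.univ.filter (fun x : Fin n => (x : ℕ) < m)).image Fin.val
      = Finset.range m := by
    ext a
    simp only [Finset.mem_image, Finset.mem_filter, Finset.mem_univ, true_and, Finset.mem_range]
    constructor
    · rintro ⟨x, hx, rfl⟩; exact hx
    · intro ha; exact ⟨⟨a, lt_of_lt_of_le ha hm⟩, ha, rfl⟩
  rw [himg, Finset.card_range]

/-- The number of orbits of the Young subgroup `∀ i, Equiv.Perm (Fin (k i))` acting on
finsets of `Σ i, Fin (k i)` (by taking images componentwise) is `∏ i, (k i + 1)`. -/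
theorem stmt_10 (h : ℕ) (k : Fin h → ℕ) :
    Nat.card (Quotient (MulAction.orbitRel (∀ i, Equiv.Perm (Fin (k i)))
        (Finset ((i : Fin h) × Fin (k i))))) = ∏ i, (k i + 1) := by
  classical
  set G := ∀ i, Equiv.Perm (Fin (k i))
  -- the invariant
  have hbound : ∀ (s : Finset ((i : Fin h) × Fin (k i))) (i : Fin h),
      (fib s i).card < k i + 1 :=
    fun s i => Nat.lt_succ_of_le (by simpa using Finset.card_le_univ (fib s i))
  let F : Finset ((i : Fin h) × Fin (k i)) → ∀ i, Fin (k i + 1) :=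
    fun s i => ⟨(fib s i).card, hbound s i⟩
  have hF : ∀ (σ : G) (s : Finset ((i : Fin h) × Fin (k i))), F (σ • s) = F s := by
    intro σ s
    funext i
    apply Fin.ext
    show (fib (σ • s) i).card = (fib s i).card
    rw [fib_smul, Finset.card_image_of_injective _ (Equiv.injective _)]
  let Fbar : Quotient (MulAction.orbitRel G (Finset ((i : Fin h) × Fin (k i)))) →
      ∀ i, Fin (k i + 1) :=
    Quotient.lift F (by
      intro s t hst
      obtain ⟨σ, rfl⟩ := (MulAction.orbitRel_apply.mp hst)
      exact hF σ t)
  have hbij : Function.Bijective Fbar := by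
    constructor
    · rintro ⟨s⟩ ⟨t⟩ hst
      have heq : ∀ i, (fib s i).card = (fib t i).card := by
        intro i
        have := congrFun hst i
        simpa [Fbar, F, Fin.ext_iff] using this
      have : ∀ i, ∃ σi : Equiv.Perm (Fin (k i)), (fib t i).image σi = fib s i :=
        fun i => exists_perm_image_eq (heq i).symm
      choose σ hσ using this
      refine Quotient.sound (MulAction.orbitRel_apply.mpr ⟨σ, ?_⟩)
      ext ⟨i, x⟩
      rw [show ((⟨i, x⟩ : (i : Fin h) × Fin (k i)) ∈ σ • t) ↔ x ∈ fib (σ • t) i from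
        mem_fib.symm, fib_smul, hσ i, mem_fib]
    · intro v
      refine ⟨Quotient.mk _ (Finset.univ.filter (fun x => (x.2 : ℕ) < (v x.1 : ℕ))), ?_⟩
      funext i
      have : fib (Finset.univ.filter
          (fun x : (i : Fin h) × Fin (k i) => (x.2 : ℕ) < (v x.1 : ℕ))) i
          = Finset.univ.filter (fun x : Fin (k i) => (x : ℕ) < (v i : ℕ)) := by
        ext x; simp [fib]
      simp only [Fbar, Quotient.lift_mk, F]
      ext
      simp only [this]
      exact card_filter_val_lt _ _ (Nat.lt_succ_iff.mp (v i).2)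
  rw [Nat.card_congr (Equiv.ofBijective Fbar hbij), Nat.card_pi]
  simp
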